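/- For all k, l ≥ 1, N_{k,l} = Σ_{i=1}^{l} Σ_{j=1}^{k} N_{k-j, i-1} · Y_{j, k-j}, with the conventions N_{0,m} = 1 and N_{m,0} = 0 for m ≥ 1. -/

import Mathlib

/-- The permutation (as a ranking function) associated to a choice `c` of one
column in each of the `k` rows of a `k × l` matrix: `σ_c i` is the number of
indices `m` with `c m < c i`, or `c m = c i` and `m ≤ i`. -/
def sigmaC {k l : ℕ} (c : Fin k → Fin l) (i : Fin k) : ℕ :=
  (Finset.univ.filter (fun m => c m < c i ∨ (c m = c i ∧ m ≤ i))).card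

/-- The sign of `σ_c`, computed as the parity of its number of inversions. -/
def sgnC {k l : ℕ} (c : Fin k → Fin l) : ℤ :=
  (-1) ^ ((Finset.univ.filter
    (fun p : Fin k × Fin k => p.1 < p.2 ∧ sigmaC c p.2 < sigmaC c p.1)).card)

/-- `N k l`: the signed count of ways to choose one entry in each row of a
`k × l` matrix. -/
def N (k l : ℕ) : ℤ := ∑ c : Fin k → Fin l, sgnC c

/-- `Y p q = binom(⌊(p+q)/2⌋, ⌊p/2⌋)` if `p` or `q` is even, and `0` otherwise. -/
def Y (p q : ℕ) : ℤ :=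
  if Even p ∨ Even q then (((p + q) / 2).choose (p / 2) : ℤ) else 0

/-! ### Auxiliary: inversion count of a word -/

def invC {k l : ℕ} (c : Fin k → Fin l) : ℕ :=
  (Finset.univ.filter (fun p : Fin k × Fin k => p.1 < p.2 ∧ c p.2 < c p.1)).card

lemma sigmaC_lt {k l : ℕ} (c : Fin k → Fin l) {i j : Fin k}
    (h : c i < c j ∨ (c i = c j ∧ i < j)) : sigmaC c i < sigmaC c j := by
  apply Finset.card_lt_card
  rw [Finset.ssubset_iff_of_subset]
  · exact ⟨j, by simp, by
      simp only [Finset.mem_filter, Finset.mem_univ, true_and]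
      rcases h with h | ⟨h, h'⟩
      · rintro (h2 | ⟨h2, _⟩)
        · exact absurd (h.trans h2) (lt_irrefl _)
        · rw [h2] at h; exact absurd h (lt_irrefl _)
      · rintro (h2 | ⟨_, h2⟩)
        · rw [h] at h2; exact absurd h2 (lt_irrefl _)
        · exact absurd h' (not_lt.mpr h2)⟩
  · intro m hm
    simp only [Finset.mem_filter, Finset.mem_univ, true_and] at hm ⊢
    rcases h with h | ⟨h, h'⟩
    · rcases hm with hm | ⟨hm, _⟩
      · exact Or.inl (hm.trans h)
      · exact Or.inl (hm ▸ h)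
    · rcases hm with hm | ⟨hm, hm'⟩
      · exact Or.inl (h ▸ hm)
      · exact Or.inr ⟨h ▸ hm, hm'.trans h'.le⟩

lemma sigmaC_lt_iff {k l : ℕ} (c : Fin k → Fin l) {i j : Fin k} (hij : i < j) :
    sigmaC c j < sigmaC c i ↔ c j < c i := by
  constructor
  · intro h
    by_contra hc
    rcases eq_or_lt_of_le (not_lt.mp hc) with h2 | h2
    · exact absurd (sigmaC_lt c (Or.inr ⟨h2, hij⟩)) (lt_asymm h)
    · exact absurd (sigmaC_lt c (Or.inl h2)) (lt_asymm h)
  · intro h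
    exact sigmaC_lt c (Or.inl h)

lemma sgnC_eq {k l : ℕ} (c : Fin k → Fin l) : sgnC c = (-1) ^ invC c := by
  unfold sgnC invC
  congr 1
  apply congrArg Finset.card
  apply Finset.filter_congr
  intro p _
  constructor
  · rintro ⟨h1, h2⟩; exact ⟨h1, (sigmaC_lt_iff c h1).mp h2⟩
  · rintro ⟨h1, h2⟩; exact ⟨h1, (sigmaC_lt_iff c h1).mpr h2⟩

lemma cnt_cons {k l : ℕ} (a b : Fin l) (d : Fin k → Fin l) :
    (Finset.univ.filter (fun q => (Fin.cons b d : Fin (k+1) → Fin l) q < a)).card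
      = (if b < a then 1 else 0) + (Finset.univ.filter (fun q => d q < a)).card := by
  rw [Finset.card_filter, Finset.card_filter, Fin.sum_univ_succ]
  simp [Fin.cons_succ]

lemma invC_cons {k l : ℕ} (a : Fin l) (d : Fin k → Fin l) :
    invC (Fin.cons a d : Fin (k+1) → Fin l)
      = (Finset.univ.filter (fun q => d q < a)).card + invC d := by
  unfold invC
  rw [Finset.card_filter, Finset.card_filter, Finset.card_filter,
    Fintype.sum_prod_type, Fin.sum_univ_succ]
  have h0 : (∑ y : Fin (k+1), if (0 : Fin (k+1)) < y ∧
        (Fin.cons a d : Fin (k+1) → Fin l) y < (Fin.cons a d : Fin (k+1) → Fin l) 0 then 1 else 0)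
      = ∑ q : Fin k, if d q < a then (1:ℕ) else 0 := by
    rw [Fin.sum_univ_succ]
    simp [Fin.cons_succ, Fin.succ_pos]
  have h1 : (∑ x : Fin k, ∑ y : Fin (k+1),
      if x.succ < y ∧ (Fin.cons a d : Fin (k+1) → Fin l) y < (Fin.cons a d : Fin (k+1) → Fin l) x.succ then (1:ℕ) else 0)
      = ∑ p : Fin k × Fin k, if p.1 < p.2 ∧ d p.2 < d p.1 then 1 else 0 := by
    rw [Fintype.sum_prod_type]
    apply Finset.sum_congr rfl
    intro x _
    rw [Fin.sum_univ_succ]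
    simp [Fin.cons_succ, Fin.succ_lt_succ_iff]
  rw [h0, h1]

lemma key_sum {l : ℕ} (x : Fin l → ℤ) (hx : ∀ v, x v * x v = 1) :
    (∑ a : Fin l, ∑ b : Fin l, (if b < a then (-1:ℤ) else 1) * (x a * x b)) = l := by
  have split : ∀ a b : Fin l, (if b < a then (-1:ℤ) else 1) * (x a * x b)
      = ((if a < b then x a * x b else 0) + (if a = b then x a * x b else 0))
        - (if b < a then x a * x b else 0) := by
    intro a b
    rcases lt_trichotomy a b with h | h | h
    · simp [h, lt_asymm h, h.ne]
    · simp [h, lt_irrefl]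
    · simp [h, lt_asymm h, (ne_of_gt h)]
  simp_rw [split, Finset.sum_sub_distrib, Finset.sum_add_distrib]
  have hswap : (∑ a : Fin l, ∑ b : Fin l, if a < b then x a * x b else 0)
      = ∑ a : Fin l, ∑ b : Fin l, if b < a then x a * x b else 0 := by
    rw [Finset.sum_comm]
    congr 1; ext a; congr 1; ext b
    by_cases h : b < a <;> simp [h, mul_comm]
  have hdiag : (∑ a : Fin l, ∑ b : Fin l, if a = b then x a * x b else 0) = l := by
    have h1 : ∀ a : Fin l, (∑ b : Fin l, if a = b then x a * x b else 0) = 1 := by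
      intro a
      rw [Finset.sum_ite_eq]
      simp [hx a]
    simp_rw [h1]
    simp
  rw [hswap, hdiag]
  ring

lemma sum_cons_peel (m l : ℕ) (f : (Fin (m+1) → Fin l) → ℤ) :
    (∑ c : Fin (m+1) → Fin l, f c) = ∑ a : Fin l, ∑ d : Fin m → Fin l, f (Fin.cons a d) := by
  rw [← Equiv.sum_comp (Fin.consEquiv (fun _ => Fin l)) f, Fintype.sum_prod_type]
  rfl

lemma N_inv (m l : ℕ) : N m l = ∑ c : Fin m → Fin l, (-1:ℤ) ^ invC c :=
  Finset.sum_congr rfl (fun c _ => sgnC_eq c)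

lemma N_step (k l : ℕ) : N (k + 2) l = l * N k l := by
  rw [N_inv, N_inv, sum_cons_peel]
  have h1 : ∀ a : Fin l, (∑ d : Fin (k+1) → Fin l, (-1:ℤ) ^ invC (Fin.cons a d))
      = ∑ b : Fin l, ∑ d : Fin k → Fin l, (-1:ℤ) ^ invC (Fin.cons a (Fin.cons b d)) := by
    intro a
    exact sum_cons_peel k l (fun d => (-1:ℤ) ^ invC (Fin.cons a d))
  simp_rw [h1]
  rw [Finset.sum_comm]
  have h2 : ∀ b : Fin l, (∑ a : Fin l, ∑ d : Fin k → Fin l,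
        (-1:ℤ) ^ invC (Fin.cons a (Fin.cons b d)))
      = ∑ d : Fin k → Fin l, ∑ a : Fin l, (-1:ℤ) ^ invC (Fin.cons a (Fin.cons b d)) :=
    fun b => Finset.sum_comm
  simp_rw [h2]
  rw [Finset.sum_comm]
  have h3 : ∀ d : Fin k → Fin l, (∑ b : Fin l, ∑ a : Fin l,
        (-1:ℤ) ^ invC (Fin.cons a (Fin.cons b d))) = (l : ℤ) * (-1:ℤ) ^ invC d := by
    intro d
    set g : Fin l → ℕ := fun v => (Finset.univ.filter (fun q => d q < v)).card with hg
    have hexp : ∀ a b : Fin l, (-1:ℤ) ^ invC (Fin.cons a (Fin.cons b d))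
        = ((if b < a then (-1:ℤ) else 1) * ((-1:ℤ)^(g a) * (-1:ℤ)^(g b))) * (-1:ℤ)^(invC d) := by
      intro a b
      rw [invC_cons, cnt_cons, invC_cons]
      rw [pow_add, pow_add, pow_add]
      have : ((-1:ℤ)) ^ (if b < a then 1 else 0) = (if b < a then (-1:ℤ) else 1) := by
        by_cases h : b < a <;> simp [h]
      rw [this]; ring
    simp_rw [hexp, ← Finset.sum_mul]
    have hsw : (∑ b : Fin l, ∑ a : Fin l,
        (if b < a then (-1:ℤ) else 1) * ((-1:ℤ)^(g a) * (-1:ℤ)^(g b)))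
        = ∑ a : Fin l, ∑ b : Fin l,
        (if b < a then (-1:ℤ) else 1) * ((-1:ℤ)^(g a) * (-1:ℤ)^(g b)) := Finset.sum_comm
    rw [hsw, key_sum (fun v => (-1:ℤ)^(g v)) (fun v => by
      rw [← pow_add]
      exact Even.neg_one_pow ⟨g v, rfl⟩)]
  simp_rw [h3]
  rw [← Finset.mul_sum]

lemma N_zero (l : ℕ) : N 0 l = 1 := by
  rw [N_inv]
  have h : ∀ c : Fin 0 → Fin l, invC c = 0 := by
    intro c
    simp [invC]
  simp [h]

lemma N_one (l : ℕ) : N 1 l = l := by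
  rw [N_inv]
  have h : ∀ c : Fin 1 → Fin l, invC c = 0 := by
    intro c
    unfold invC
    rw [Finset.filter_false_of_mem, Finset.card_empty]
    intro p _
    have : p.1 = p.2 := Subsingleton.elim _ _
    simp [this]
  simp [h, Finset.card_univ]

lemma N_closed : ∀ (k l : ℕ), N k l = (l:ℤ)^((k+1)/2)
  | 0, l => by simpa using N_zero l
  | 1, l => by simpa using N_one l
  | (k+2), l => by
    rw [N_step, N_closed k l]
    have h : (k+2+1)/2 = (k+1)/2 + 1 := by omega
    rw [h, pow_succ]
    ring

/-! ### Auxiliary: the binomial side -/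

open Finset in
lemma sum_range_even_odd {M : Type*} [AddCommMonoid M] (f : ℕ → M) (n : ℕ) :
    ∑ t ∈ range (2*n), f t = ∑ s ∈ range n, f (2*s) + ∑ s ∈ range n, f (2*s+1) := by
  induction n with
  | zero => simp
  | succ n ih =>
    have h : 2*(n+1) = (2*n+1)+1 := by ring
    rw [h, sum_range_succ, sum_range_succ, sum_range_succ, sum_range_succ, ih]
    abel

open Finset in
lemma sum_range_even_odd' {M : Type*} [AddCommMonoid M] (f : ℕ → M) (n : ℕ) :
    ∑ t ∈ range (2*n+1), f t
      = ∑ s ∈ range (n+1), f (2*s) + ∑ s ∈ range n, f (2*s+1) := by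
  rw [sum_range_succ, sum_range_even_odd, sum_range_succ]
  abel

open Finset in
lemma binom_partial (K : ℕ) (n : ℤ) :
    ∑ j ∈ range K, n^j * (K.choose j : ℤ) = (n+1)^K - n^K := by
  have h := add_pow n 1 K
  simp only [one_pow, mul_one] at h
  rw [h, sum_range_succ]
  simp

open Finset in
lemma claimA (K : ℕ) (n : ℤ) :
    ∑ s ∈ range K, n^(K-1-s) * ((K.choose (s+1)) : ℤ) = (n+1)^K - n^K := by
  have hr := Finset.sum_range_reflect (fun j => n^j * ((K.choose (K-j)) : ℤ)) K
  beta_reduce at hr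
  have h1 : ∑ s ∈ range K, n^(K-1-s) * ((K.choose (s+1)) : ℤ)
      = ∑ s ∈ range K, n^(K-1-s) * ((K.choose (K-(K-1-s))) : ℤ) := by
    apply sum_congr rfl
    intro s hs
    simp only [mem_range] at hs
    have : K - (K-1-s) = s+1 := by omega
    rw [this]
  rw [h1, hr, ← binom_partial K n]
  apply sum_congr rfl
  intro j hj
  simp only [mem_range] at hj
  rw [Nat.choose_symm (by omega)]

open Finset in
lemma claimB (K : ℕ) (n : ℤ) :
    ∑ s ∈ range (K+1), n^(K-s) * ((K.choose s) : ℤ) = (n+1)^K := by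
  have hr := Finset.sum_range_reflect (fun j => n^j * ((K.choose (K-j)) : ℤ)) (K+1)
  beta_reduce at hr
  have h1 : ∑ s ∈ range (K+1), n^(K-s) * ((K.choose s) : ℤ)
      = ∑ s ∈ range (K+1), n^(K+1-1-s) * ((K.choose (K-(K+1-1-s))) : ℤ) := by
    apply sum_congr rfl
    intro s hs
    simp only [mem_range] at hs
    have e1 : K+1-1-s = K-s := by omega
    have e2 : K - (K-s) = s := by omega
    rw [e1, e2]
  rw [h1, hr]
  have h := add_pow n 1 K
  simp only [one_pow, mul_one] at h
  rw [h]
  apply sum_congr rfl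
  intro j hj
  simp only [mem_range] at hj
  rw [Nat.choose_symm (by omega)]

open Finset in
lemma innerSumY (k : ℕ) (hk : 1 ≤ k) (n : ℕ) :
    ∑ j ∈ Icc 1 k, (n:ℤ)^((k-j+1)/2) * Y j (k-j)
      = ((n:ℤ)+1)^((k+1)/2) - (n:ℤ)^((k+1)/2) := by
  rw [← Finset.Ico_add_one_right_eq_Icc, sum_Ico_eq_sum_range]
  simp only [Nat.add_sub_cancel]
  rcases Nat.even_or_odd k with ⟨K, hK⟩ | ⟨K, hK⟩
  · -- k = 2K
    have hk2 : k = 2*K := by omega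
    subst hk2
    have hexp : (2*K+1)/2 = K := by omega
    rw [hexp, sum_range_even_odd]
    have heven : ∑ s ∈ range K,
        (n:ℤ)^((2*K-(1+2*s)+1)/2) * Y (1+2*s) (2*K-(1+2*s)) = 0 := by
      apply sum_eq_zero
      intro s hs
      simp only [mem_range] at hs
      have h1 : 1+2*s = 2*s+1 := by ring
      have h2 : 2*K-(2*s+1) = 2*(K-s-1)+1 := by omega
      rw [h1, h2]
      have : Y (2*s+1) (2*(K-s-1)+1) = 0 := by
        simp [Y, Nat.even_add_one, parity_simps]
      rw [this, mul_zero]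
    rw [heven, zero_add]
    have hodd : ∑ s ∈ range K,
        (n:ℤ)^((2*K-(1+(2*s+1))+1)/2) * Y (1+(2*s+1)) (2*K-(1+(2*s+1)))
        = ∑ s ∈ range K, (n:ℤ)^(K-1-s) * ((K.choose (s+1)) : ℤ) := by
      apply sum_congr rfl
      intro s hs
      simp only [mem_range] at hs
      have h1 : 1+(2*s+1) = 2*s+2 := by ring
      have h2 : 2*K-(2*s+2) = 2*(K-s-1) := by omega
      have h3 : (2*(K-s-1)+1)/2 = K-1-s := by omega
      rw [h1, h2, h3]
      congr 1
      rw [Y, if_pos (Or.inl ⟨s+1, by ring⟩)]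
      have h4 : (2*s+2 + 2*(K-s-1))/2 = K := by omega
      have h5 : (2*s+2)/2 = s+1 := by omega
      rw [h4, h5]
    rw [hodd, claimA]
  · -- k = 2K+1
    subst hK
    have hexp : (2*K+1+1)/2 = K+1 := by omega
    rw [hexp, sum_range_even_odd']
    have heven : ∑ s ∈ range (K+1),
        (n:ℤ)^((2*K+1-(1+2*s)+1)/2) * Y (1+2*s) (2*K+1-(1+2*s))
        = ∑ s ∈ range (K+1), (n:ℤ)^(K-s) * ((K.choose s) : ℤ) := by
      apply sum_congr rfl
      intro s hs
      simp only [mem_range] at hs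
      have h1 : 1+2*s = 2*s+1 := by ring
      have h2 : 2*K+1-(2*s+1) = 2*(K-s) := by omega
      have h3 : (2*(K-s)+1)/2 = K-s := by omega
      rw [h1, h2, h3]
      congr 1
      rw [Y, if_pos (Or.inr ⟨K-s, by ring⟩)]
      have h4 : (2*s+1 + 2*(K-s))/2 = K := by omega
      have h5 : (2*s+1)/2 = s := by omega
      rw [h4, h5]
    have hodd : ∑ s ∈ range K,
        (n:ℤ)^((2*K+1-(1+(2*s+1))+1)/2) * Y (1+(2*s+1)) (2*K+1-(1+(2*s+1)))
        = ∑ s ∈ range K, (n:ℤ) * ((n:ℤ)^(K-1-s) * ((K.choose (s+1)) : ℤ)) := by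
      apply sum_congr rfl
      intro s hs
      simp only [mem_range] at hs
      have h1 : 1+(2*s+1) = 2*s+2 := by ring
      have h2 : 2*K+1-(2*s+2) = 2*(K-s-1)+1 := by omega
      have h3 : (2*(K-s-1)+1+1)/2 = K-s := by omega
      rw [h1, h2, h3]
      have h6 : (n:ℤ)^(K-s) = (n:ℤ) * (n:ℤ)^(K-1-s) := by
        have : K-s = (K-1-s)+1 := by omega
        rw [this, pow_succ]; ring
      rw [h6]
      have hY : Y (2*s+2) (2*(K-s-1)+1) = ((K.choose (s+1)) : ℤ) := by
        rw [Y, if_pos (Or.inl ⟨s+1, by ring⟩)]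
        have h4 : (2*s+2 + (2*(K-s-1)+1))/2 = K := by omega
        have h5 : (2*s+2)/2 = s+1 := by omega
        rw [h4, h5]
      rw [hY]; ring
    rw [heven, hodd, claimB, ← mul_sum, claimA]
    ring

theorem N_recursion (k l : ℕ) (hk : 1 ≤ k) (hl : 1 ≤ l) :
    N k l = ∑ i ∈ Finset.Icc 1 l, ∑ j ∈ Finset.Icc 1 k,
      N (k - j) (i - 1) * Y j (k - j) := by
  have hinner : ∀ i ∈ Finset.Icc 1 l,
      (∑ j ∈ Finset.Icc 1 k, N (k-j) (i-1) * Y j (k-j))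
        = ((i:ℤ))^((k+1)/2) - ((i:ℤ)-1)^((k+1)/2) := by
    intro i hi
    rw [Finset.mem_Icc] at hi
    have h1 : ∀ j ∈ Finset.Icc 1 k, N (k-j) (i-1) * Y j (k-j)
        = ((i-1:ℕ):ℤ)^((k-j+1)/2) * Y j (k-j) := by
      intro j _; rw [N_closed]
    rw [Finset.sum_congr rfl h1, innerSumY k hk (i-1)]
    have h2 : ((i-1:ℕ):ℤ) = (i:ℤ)-1 := by
      rw [Nat.cast_sub hi.1]; norm_num
    rw [h2]
    ring_nf
  rw [Finset.sum_congr rfl hinner]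
  rw [← Finset.Ico_add_one_right_eq_Icc, Finset.sum_Ico_eq_sum_range]
  simp only [Nat.add_sub_cancel]
  have h3 : ∀ t ∈ Finset.range l, ((1+t:ℕ):ℤ)^((k+1)/2) - (((1+t:ℕ):ℤ)-1)^((k+1)/2)
      = ((((t+1:ℕ)):ℤ)^((k+1)/2) - (((t:ℕ)):ℤ)^((k+1)/2)) := by
    intro t _
    push_cast
    ring_nf
  rw [Finset.sum_congr rfl h3, Finset.sum_range_sub (fun m => ((m:ℕ):ℤ)^((k+1)/2)) l]
  rw [N_closed]
  have h4 : ((0:ℕ):ℤ)^((k+1)/2) = 0 := by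
    rw [Nat.cast_zero, zero_pow]
    omega
  rw [h4]
  ring
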